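/- arXiv:1709.01702 — 6 statements merged into one kernel-verified Lean document; each statement's English description precedes it below -/
import Mathlib

section
/- Let 0 < p < 1, T > 0, α > 2 and C > 0, and define ξ(G) = C·(1 − (1−p)^{G·T})·G^{−2/α} for G > 0. Then there exists a unique g₀ > 0 at which ξ attains its global maximum over (0,∞); moreover ξ is strictly monotone increasing on (0, g₀] and strictly monotone decreasing on [g₀, ∞), and g₀ satisfies the critical-point equation α·g₀·T·ln(1−p)·(1−p)^{g₀·T} − 2·(1−p)^{g₀·T} + 2 = 0. -/
open Filter Real Set

private lemma phi_hasDeriv (b c x : ℝ) :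
    HasDerivAt (fun x => Real.exp (-(b*x)) * (b*x + c) - c)
      (Real.exp (-(b*x)) * b * (1 - c - b*x)) x := by
  have h1 : HasDerivAt (fun x : ℝ => -(b*x)) (-b) x := by
    simpa [Pi.neg_def] using ((hasDerivAt_id x).const_mul b).neg
  have h2 : HasDerivAt (fun x : ℝ => Real.exp (-(b*x))) (Real.exp (-(b*x)) * (-b)) x :=
    (Real.hasDerivAt_exp _).comp x h1
  have h3 : HasDerivAt (fun x : ℝ => b*x + c) b x := by
    simpa using ((hasDerivAt_id x).const_mul b).add_const c
  have h4 := (h2.fun_mul h3).sub_const c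
  refine h4.congr_deriv ?_
  ring

private lemma aux_zero (b c : ℝ) (hb : 0 < b) (hc0 : 0 < c) (hc1 : c < 1) :
    ∃ g₀ : ℝ, 0 < g₀ ∧
      Real.exp (-(b*g₀)) * (b*g₀ + c) - c = 0 ∧
      (∀ x, 0 < x → x < g₀ → 0 < Real.exp (-(b*x)) * (b*x + c) - c) ∧
      (∀ x, g₀ < x → Real.exp (-(b*x)) * (b*x + c) - c < 0) := by
  set φ : ℝ → ℝ := fun x => Real.exp (-(b*x)) * (b*x + c) - c with hφ
  set m : ℝ := (1 - c)/b with hm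
  have hm0 : 0 < m := div_pos (by linarith) hb
  have hcont : Continuous φ := by
    apply Continuous.sub _ continuous_const
    exact ((Real.continuous_exp.comp (continuous_const.mul continuous_id).neg).mul
      ((continuous_const.mul continuous_id).add continuous_const))
  -- strict monotonicity on [0, m]
  have hmono : StrictMonoOn φ (Set.Icc 0 m) := by
    apply strictMonoOn_of_deriv_pos (convex_Icc _ _) hcont.continuousOn
    intro x hx
    rw [interior_Icc] at hx
    rw [(phi_hasDeriv b c x).deriv]
    have hbx : b * x < 1 - c := by
      have := hx.2
      rw [hm, lt_div_iff₀ hb] at this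
      linarith [this]
    have : 0 < 1 - c - b*x := by linarith
    positivity
  -- strict antitonicity on [m, ∞)
  have hanti : StrictAntiOn φ (Set.Ici m) := by
    apply strictAntiOn_of_deriv_neg (convex_Ici _) hcont.continuousOn
    intro x hx
    rw [interior_Ici] at hx
    rw [(phi_hasDeriv b c x).deriv]
    have hbx : 1 - c < b * x := by
      have := hx
      rw [Set.mem_Ioi, hm, div_lt_iff₀ hb] at this
      linarith [this]
    have h1 : 1 - c - b*x < 0 := by linarith
    have h2 : 0 < Real.exp (-(b*x)) * b := by positivity
    nlinarith [h2, h1]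
  have hφ0 : φ 0 = 0 := by simp [hφ]
  have hφm : 0 < φ m := by
    have := hmono (Set.mem_Icc.mpr ⟨le_rfl, hm0.le⟩) (Set.mem_Icc.mpr ⟨hm0.le, le_rfl⟩) hm0
    rw [hφ0] at this; exact this
  -- φ tends to -c at infinity
  have t0 : Tendsto (fun u : ℝ => (u + c) * Real.exp (-u)) atTop (nhds 0) := by
    have h1 := Real.tendsto_pow_mul_exp_neg_atTop_nhds_zero 1
    have h2 : Tendsto (fun u : ℝ => c * Real.exp (-u)) atTop (nhds 0) := by
      simpa using (Real.tendsto_exp_neg_atTop_nhds_zero).const_mul c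
    have h3 := h1.add h2
    simp only [pow_one, add_zero] at h3
    refine h3.congr (fun u => by ring)
  have tb : Tendsto (fun x : ℝ => b * x) atTop atTop :=
    Tendsto.const_mul_atTop hb tendsto_id
  have t1 : Tendsto φ atTop (nhds (0 - c)) := by
    have := (t0.comp tb).sub (tendsto_const_nhds (x := c))
    refine this.congr (fun x => ?_)
    simp only [Function.comp]
    ring
  have hev : ∀ᶠ x in atTop, φ x < 0 := t1.eventually_lt_const (by linarith)
  obtain ⟨X, hX1, hX2⟩ := (hev.and (eventually_ge_atTop m)).exists
  have hIVT := intermediate_value_Icc' hX2 hcont.continuousOn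
  have h0mem : (0:ℝ) ∈ Set.Icc (φ X) (φ m) := ⟨hX1.le, hφm.le⟩
  obtain ⟨g₀, hg₀mem, hg₀⟩ := hIVT h0mem
  have hmg₀ : m < g₀ := by
    rcases lt_or_eq_of_le hg₀mem.1 with h | h
    · exact h
    · exfalso; rw [← h] at hg₀; rw [hg₀] at hφm; exact lt_irrefl 0 hφm
  refine ⟨g₀, hm0.trans hmg₀, hg₀, ?_, ?_⟩
  · intro x hx0 hxg
    rcases le_or_gt x m with h | h
    · have := hmono (Set.mem_Icc.mpr ⟨le_rfl, hm0.le⟩) (Set.mem_Icc.mpr ⟨hx0.le, h⟩) hx0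
      rw [hφ0] at this; exact this
    · have := hanti (Set.mem_Ici.mpr h.le) (Set.mem_Ici.mpr hmg₀.le) hxg
      rw [hg₀] at this; exact this
  · intro x hgx
    have := hanti (Set.mem_Ici.mpr hmg₀.le) (Set.mem_Ici.mpr (hmg₀.trans hgx).le) hgx
    rw [hg₀] at this; exact this

/-- For `0 < p < 1`, `T > 0`, `α > 2`, `C > 0` and
`ξ(G) = C·(1 − (1−p)^{G·T})·G^{−2/α}` (rpow) on `(0,∞)`, there is a unique
global maximizer `g₀ > 0`; `ξ` is strictly increasing on `(0, g₀]`, strictly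
decreasing on `[g₀, ∞)`, and `g₀` satisfies the critical-point equation. -/
theorem stmt_0 (p T α C : ℝ) (hp0 : 0 < p) (hp1 : p < 1) (hT : 0 < T)
    (hα : 2 < α) (hC : 0 < C) (ξ : ℝ → ℝ)
    (hξ : ∀ G : ℝ, 0 < G → ξ G = C * (1 - (1 - p) ^ (G * T)) * G ^ (-2 / α)) :
    ∃ g₀ : ℝ, 0 < g₀ ∧ (∀ G, 0 < G → ξ G ≤ ξ g₀) ∧
      (∀ g', 0 < g' → (∀ G, 0 < G → ξ G ≤ ξ g') → g' = g₀) ∧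
      StrictMonoOn ξ (Set.Ioc 0 g₀) ∧ StrictAntiOn ξ (Set.Ici g₀) ∧
      α * g₀ * T * Real.log (1 - p) * (1 - p) ^ (g₀ * T)
        - 2 * (1 - p) ^ (g₀ * T) + 2 = 0 := by
  have hq0 : 0 < 1 - p := by linarith
  have hq1 : 1 - p < 1 := by linarith
  have hL : Real.log (1 - p) < 0 := Real.log_neg hq0 hq1
  set b : ℝ := -(T * Real.log (1 - p)) with hbdef
  set c : ℝ := 2 / α with hcdef
  have hα0 : 0 < α := by linarith
  have hb : 0 < b := by rw [hbdef]; nlinarith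
  have hc0 : 0 < c := by rw [hcdef]; positivity
  have hc1 : c < 1 := by rw [hcdef, div_lt_one hα0]; linarith
  have hc2 : α * c = 2 := by rw [hcdef]; field_simp
  have hrpow : ∀ G : ℝ, (1 - p) ^ (G * T) = Real.exp (-(b * G)) := by
    intro G
    rw [Real.rpow_def_of_pos hq0]
    congr 1
    rw [hbdef]; ring
  set f : ℝ → ℝ := fun G => C * (1 - Real.exp (-(b * G))) * G ^ (-2 / α) with hfdef
  have hξf : ∀ G : ℝ, 0 < G → ξ G = f G := by
    intro G hG
    rw [hξ G hG, hrpow G]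
  set φ : ℝ → ℝ := fun x => Real.exp (-(b*x)) * (b*x + c) - c with hφdef
  -- derivative of f
  have hfd : ∀ G : ℝ, 0 < G → HasDerivAt f (C * G ^ (-2/α - 1) * φ G) G := by
    intro G hG
    have h1 : HasDerivAt (fun x : ℝ => -(b*x)) (-b) G := by
      simpa [Pi.neg_def] using ((hasDerivAt_id G).const_mul b).neg
    have h2 : HasDerivAt (fun x : ℝ => Real.exp (-(b*x))) (Real.exp (-(b*G)) * (-b)) G :=
      (Real.hasDerivAt_exp _).comp G h1
    have h6 : HasDerivAt (fun x : ℝ => C * (1 - Real.exp (-(b*x))))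
        (C * (0 - Real.exp (-(b*G)) * (-b))) G :=
      ((hasDerivAt_const G (1:ℝ)).sub h2).const_mul C
    have h5 : HasDerivAt (fun x : ℝ => x ^ (-2/α)) ((-2/α) * G ^ (-2/α - 1)) G :=
      Real.hasDerivAt_rpow_const (Or.inl hG.ne')
    have h7 := h6.fun_mul h5
    refine h7.congr_deriv ?_
    have hpow : G ^ (-2/α) = G ^ (-2/α - 1) * G := by
      rw [← Real.rpow_add_one hG.ne' (-2/α - 1)]
      norm_num
    simp only [hφdef, hcdef, hpow]
    field_simp
    ring
  obtain ⟨g₀, hg₀pos, hg₀eq, hsignpos, hsignneg⟩ := aux_zero b c hb hc0 hc1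
  -- strict monotonicity of f
  have hfmono : StrictMonoOn f (Set.Ioc 0 g₀) := by
    apply strictMonoOn_of_deriv_pos (convex_Ioc _ _)
    · intro x hx
      exact (hfd x hx.1).continuousAt.continuousWithinAt
    · intro x hx
      rw [interior_Ioc] at hx
      rw [(hfd x hx.1).deriv]
      have hx0 : 0 < x := hx.1
      have h1 : 0 < φ x := hsignpos x hx.1 hx.2
      have h2 : 0 < C * x ^ (-2/α - 1) := by positivity
      exact mul_pos h2 h1
  have hfanti : StrictAntiOn f (Set.Ici g₀) := by
    apply strictAntiOn_of_deriv_neg (convex_Ici _)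
    · intro x hx
      exact (hfd x (hg₀pos.trans_le hx)).continuousAt.continuousWithinAt
    · intro x hx
      rw [interior_Ici] at hx
      rw [(hfd x (hg₀pos.trans hx)).deriv]
      have hx0 : 0 < x := hg₀pos.trans hx
      have h1 : φ x < 0 := hsignneg x hx
      have h2 : 0 < C * x ^ (-2/α - 1) := by positivity
      exact mul_neg_of_pos_of_neg h2 h1
  have hξmono : StrictMonoOn ξ (Set.Ioc 0 g₀) := by
    intro x hx y hy hxy
    rw [hξf x hx.1, hξf y hy.1]
    exact hfmono hx hy hxy
  have hξanti : StrictAntiOn ξ (Set.Ici g₀) := by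
    intro x hx y hy hxy
    rw [hξf x (hg₀pos.trans_le hx), hξf y (hg₀pos.trans_le hy)]
    exact hfanti hx hy hxy
  have hmax : ∀ G, 0 < G → ξ G ≤ ξ g₀ := by
    intro G hG
    rcases le_or_gt G g₀ with h | h
    · exact hξmono.monotoneOn ⟨hG, h⟩ ⟨hg₀pos, le_rfl⟩ h
    · exact (hξanti (Set.mem_Ici.mpr le_rfl) (Set.mem_Ici.mpr h.le) h).le
  refine ⟨g₀, hg₀pos, hmax, ?_, hξmono, hξanti, ?_⟩
  · intro g' hg' hg'max
    rcases lt_trichotomy g' g₀ with h | h | h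
    · exfalso
      have h1 : ξ g' < ξ g₀ := hξmono ⟨hg', h.le⟩ ⟨hg₀pos, le_rfl⟩ h
      have h2 : ξ g₀ ≤ ξ g' := hg'max g₀ hg₀pos
      linarith
    · exact h
    · exfalso
      have h1 : ξ g' < ξ g₀ := hξanti (Set.mem_Ici.mpr le_rfl) (Set.mem_Ici.mpr h.le) h
      have h2 : ξ g₀ ≤ ξ g' := hg'max g₀ hg₀pos
      linarith
  · rw [hrpow g₀]
    linear_combination (-α) * hg₀eq + (Real.exp (-(b*g₀)) - 1) * hc2
      + (α * Real.exp (-(b*g₀)) * g₀) * hbdef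
end

section
/- Let 0 < p < 1, T > 0, α > 2 and C > 0, and define ξ(G) = C·(1 − (1−p)^{G·T})·G^{−2/α} for G > 0, with unique maximizer g₀ > 0. If F is any real number with 0 < F < ξ(g₀), then there exist unique g_a ∈ (0, g₀) and g_b ∈ (g₀, ∞) with ξ(g_a) = ξ(g_b) = F, and for every G > 0 one has ξ(G) ≤ F if and only if G ≤ g_a or G ≥ g_b. -/
/-- With `ξ(G) = C·(1−(1−p)^{G·T})·G^{−2/α}` and `g₀` its unique
maximizer (strictly increasing on `(0,g₀]`, strictly decreasing on `[g₀,∞)`),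
for any `0 < F < ξ(g₀)` there are unique `g_a ∈ (0,g₀)` and `g_b ∈ (g₀,∞)` with
`ξ(g_a) = ξ(g_b) = F`, and for every `G > 0`: `ξ(G) ≤ F ↔ G ≤ g_a ∨ g_b ≤ G`. -/
theorem stmt_4 (p T α C g₀ F : ℝ) (hp0 : 0 < p) (hp1 : p < 1) (hT : 0 < T)
    (hα : 2 < α) (hC : 0 < C) (ξ : ℝ → ℝ)
    (hξ : ∀ G : ℝ, 0 < G → ξ G = C * (1 - (1 - p) ^ (G * T)) * G ^ (-2 / α))
    (hg₀ : 0 < g₀) (hmono : StrictMonoOn ξ (Set.Ioc 0 g₀))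
    (hanti : StrictAntiOn ξ (Set.Ici g₀))
    (hmax : ∀ G, 0 < G → ξ G ≤ ξ g₀)
    (hF0 : 0 < F) (hF : F < ξ g₀) :
    (∃! ga : ℝ, ga ∈ Set.Ioo 0 g₀ ∧ ξ ga = F) ∧
    (∃! gb : ℝ, gb ∈ Set.Ioi g₀ ∧ ξ gb = F) ∧
    ∀ ga gb : ℝ, ga ∈ Set.Ioo 0 g₀ → ξ ga = F → gb ∈ Set.Ioi g₀ → ξ gb = F →
      ∀ G : ℝ, 0 < G → (ξ G ≤ F ↔ G ≤ ga ∨ gb ≤ G) := by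
  have hαpos : (0:ℝ) < α := by linarith
  have hα2 : (0:ℝ) < α - 2 := by linarith
  have h1p : (0:ℝ) < 1 - p := by linarith
  have h1p1 : (1:ℝ) - p < 1 := by linarith
  set L := -Real.log (1 - p) with hLdef
  have hLpos : 0 < L := by
    have := Real.log_neg h1p h1p1
    simp only [hLdef]; linarith
  -- continuity
  have hcont : ContinuousOn ξ (Set.Ioi 0) := by
    have hform : ∀ G ∈ Set.Ioi (0:ℝ),
        C * (1 - Real.exp (Real.log (1 - p) * (G * T))) * G ^ (-2 / α) = ξ G := by
      intro G hG
      rw [hξ G hG, Real.rpow_def_of_pos h1p]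
    apply ContinuousOn.congr _ fun G hG => (hform G hG).symm
    apply ContinuousOn.mul
    · exact (continuous_const.mul (continuous_const.sub (Real.continuous_exp.comp
        (continuous_const.mul (continuous_id.mul continuous_const))))).continuousOn
    · intro x hx
      exact (Real.continuousAt_rpow_const x _ (Or.inl (ne_of_gt hx))).continuousWithinAt
  -- bound near zero: ξ G ≤ C*T*L*G^((α-2)/α)
  have hsmall : ∀ G : ℝ, 0 < G → ξ G ≤ C * T * L * G ^ ((α - 2) / α) := by
    intro G hG
    rw [hξ G hG]
    have h1 : 1 - (1 - p) ^ (G * T) ≤ L * (G * T) := by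
      have := Real.add_one_le_exp (Real.log (1 - p) * (G * T))
      rw [Real.rpow_def_of_pos h1p]
      simp only [hLdef]; nlinarith
    have hGT : 0 < G ^ (-2 / α) := Real.rpow_pos_of_pos hG _
    have h2 : C * (1 - (1 - p) ^ (G * T)) * G ^ (-2 / α)
        ≤ C * (L * (G * T)) * G ^ (-2 / α) := by
      apply mul_le_mul_of_nonneg_right _ hGT.le
      exact mul_le_mul_of_nonneg_left h1 hC.le
    refine h2.trans (le_of_eq ?_)
    have hGG : G * G ^ (-2 / α) = G ^ ((α - 2) / α) := by
      have h : (α - 2) / α = 1 + (-2 / α) := by field_simp; ring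
      rw [h, Real.rpow_add hG, Real.rpow_one]
    calc C * (L * (G * T)) * G ^ (-2 / α) = C * T * L * (G * G ^ (-2 / α)) := by ring
      _ = C * T * L * G ^ ((α - 2) / α) := by rw [hGG]
  -- bound at infinity: ξ G ≤ C * G^(-2/α)
  have hbig : ∀ G : ℝ, 0 < G → ξ G ≤ C * G ^ (-2 / α) := by
    intro G hG
    rw [hξ G hG]
    have hGT : 0 < G ^ (-2 / α) := Real.rpow_pos_of_pos hG _
    have h1 : 1 - (1 - p) ^ (G * T) ≤ 1 := by
      have := Real.rpow_nonneg h1p.le (G * T); linarith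
    calc C * (1 - (1 - p) ^ (G * T)) * G ^ (-2 / α)
        ≤ C * 1 * G ^ (-2 / α) := by
          apply mul_le_mul_of_nonneg_right _ hGT.le
          exact mul_le_mul_of_nonneg_left h1 hC.le
      _ = C * G ^ (-2 / α) := by ring
  -- point x near 0 with ξ x ≤ F
  have hCTL : 0 < C * T * L := by positivity
  set δ := (F / (C * T * L)) ^ (α / (α - 2)) with hδdef
  have hδpos : 0 < δ := Real.rpow_pos_of_pos (by positivity) _
  set x := min g₀ δ with hxdef
  have hxpos : 0 < x := lt_min hg₀ hδpos
  have hxg : x ≤ g₀ := min_le_left _ _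
  have hξx : ξ x ≤ F := by
    refine (hsmall x hxpos).trans ?_
    have hδe : δ ^ ((α - 2) / α) = F / (C * T * L) := by
      rw [hδdef, ← Real.rpow_mul (by positivity)]
      have : α / (α - 2) * ((α - 2) / α) = 1 := by field_simp
      rw [this, Real.rpow_one]
    have hx1 : x ^ ((α - 2) / α) ≤ δ ^ ((α - 2) / α) :=
      Real.rpow_le_rpow hxpos.le (min_le_right _ _) (by positivity)
    calc C * T * L * x ^ ((α - 2) / α) ≤ C * T * L * (F / (C * T * L)) := by
          rw [← hδe]; exact mul_le_mul_of_nonneg_left hx1 hCTL.le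
      _ = F := by field_simp
  -- point y large with ξ y ≤ F
  set M := (C / F) ^ (α / 2) with hMdef
  have hMpos : 0 < M := Real.rpow_pos_of_pos (by positivity) _
  set y := max g₀ M with hydef
  have hypos : 0 < y := lt_of_lt_of_le hMpos (le_max_right _ _)
  have hgy : g₀ ≤ y := le_max_left _ _
  have hξy : ξ y ≤ F := by
    refine (hbig y hypos).trans ?_
    have hMy : M ≤ y := le_max_right _ _
    have h1 : y ^ (-2 / α) ≤ M ^ (-2 / α) := by
      apply Real.rpow_le_rpow_of_nonpos hMpos hMy
      rw [neg_div]
      exact neg_nonpos.mpr (by positivity)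
    have hMe : M ^ (-2 / α) = F / C := by
      rw [hMdef, ← Real.rpow_mul (by positivity)]
      have : α / 2 * (-2 / α) = -1 := by field_simp
      rw [this, Real.rpow_neg_one, inv_div]
    calc C * y ^ (-2 / α) ≤ C * (F / C) := by
          rw [← hMe]; exact mul_le_mul_of_nonneg_left h1 hC.le
      _ = F := by field_simp
  -- existence of ga via IVT on [x, g₀]
  have hsub1 : Set.Icc x g₀ ⊆ Set.Ioi (0:ℝ) := fun z hz => lt_of_lt_of_le hxpos hz.1
  have hIVT1 := intermediate_value_Icc hxg (hcont.mono hsub1)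
  obtain ⟨ga, hga_mem, hga_eq⟩ := hIVT1 ⟨hξx, hF.le⟩
  have hga_pos : 0 < ga := lt_of_lt_of_le hxpos hga_mem.1
  have hga_lt : ga < g₀ := lt_of_le_of_ne hga_mem.2 (by rintro rfl; exact absurd hga_eq (by linarith))
  -- existence of gb via IVT on [g₀, y]
  have hsub2 : Set.Icc g₀ y ⊆ Set.Ioi (0:ℝ) := fun z hz => lt_of_lt_of_le hg₀ hz.1
  have hIVT2 := intermediate_value_Icc' hgy (hcont.mono hsub2)
  obtain ⟨gb, hgb_mem, hgb_eq⟩ := hIVT2 ⟨hξy, hF.le⟩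
  have hgb_gt : g₀ < gb := lt_of_le_of_ne hgb_mem.1 (by rintro rfl; exact absurd hgb_eq (by linarith))
  -- uniqueness helpers
  have hinj1 : ∀ a b : ℝ, a ∈ Set.Ioo 0 g₀ → b ∈ Set.Ioo 0 g₀ → ξ a = ξ b → a = b := by
    intro a b ha hb hab
    exact hmono.injOn ⟨ha.1, ha.2.le⟩ ⟨hb.1, hb.2.le⟩ hab
  have hinj2 : ∀ a b : ℝ, a ∈ Set.Ioi g₀ → b ∈ Set.Ioi g₀ → ξ a = ξ b → a = b := by
    intro a b ha hb hab
    exact hanti.injOn (Set.mem_Ici.mpr (le_of_lt ha)) (Set.mem_Ici.mpr (le_of_lt hb)) hab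
  refine ⟨⟨ga, ⟨⟨hga_pos, hga_lt⟩, hga_eq⟩, fun z hz => hinj1 z ga hz.1 ⟨hga_pos, hga_lt⟩ (hz.2.trans hga_eq.symm)⟩,
    ⟨gb, ⟨hgb_gt, hgb_eq⟩, fun z hz => hinj2 z gb hz.1 hgb_gt (hz.2.trans hgb_eq.symm)⟩, ?_⟩
  intro ga' gb' ha' haF hb' hbF G hG
  constructor
  · intro hle
    by_contra hcon
    push_neg at hcon
    obtain ⟨h1, h2⟩ := hcon
    -- ga' < G < gb'
    rcases le_or_gt G g₀ with hGg | hGg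
    · have : ξ ga' < ξ G := hmono ⟨ha'.1, ha'.2.le⟩ ⟨hG, hGg⟩ h1
      rw [haF] at this; linarith
    · have : ξ gb' < ξ G := hanti hGg.le (Set.mem_Ici.mpr (le_of_lt hb')) h2
      rw [hbF] at this; linarith
  · rintro (h | h)
    · have : ξ G ≤ ξ ga' := by
        rcases eq_or_lt_of_le h with rfl | hlt
        · exact le_refl _
        · exact (hmono ⟨hG, (h.trans ha'.2.le)⟩ ⟨ha'.1, ha'.2.le⟩ hlt).le
      rw [haF] at this; exact this
    · have : ξ G ≤ ξ gb' := by
        rcases eq_or_lt_of_le h with rfl | hlt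
        · exact le_refl _
        · exact (hanti (Set.mem_Ici.mpr (le_of_lt hb')) (Set.mem_Ici.mpr ((le_of_lt hb').trans h)) hlt).le
      rw [hbF] at this; exact this
end

section
/- Let 0 < p < 1 and T > 0. The communication-latency function T_comm(G) = G·T + G·T/(1 − (1−p)^{G·T}) − 1/p is strictly monotone increasing in G on (0, ∞). -/
/-- For `0 < p < 1` and `T > 0`, the communication latency
`T_comm(G) = G·T + G·T/(1 − (1−p)^{G·T}) − 1/p` (rpow) is strictly increasing
in `G` on `(0, ∞)`. -/
theorem stmt_6 (p T : ℝ) (hp0 : 0 < p) (hp1 : p < 1) (hT : 0 < T) :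
    StrictMonoOn
      (fun G : ℝ => G * T + G * T / (1 - (1 - p) ^ (G * T)) - 1 / p)
      (Set.Ioi 0) := by
  have hq : 0 < 1 - p := by linarith
  set L := Real.log (1 - p) with hLdef
  have hLneg : L < 0 := Real.log_neg hq (by linarith)
  have hfun : (fun G : ℝ => G * T + G * T / (1 - (1 - p) ^ (G * T)) - 1 / p)
      = fun G : ℝ => G * T + G * T / (1 - Real.exp (L * (G * T))) - 1 / p := by
    funext G
    rw [Real.rpow_def_of_pos hq]
  rw [hfun]
  have key : ∀ G : ℝ, G ∈ Set.Ioi (0:ℝ) →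
      HasDerivAt (fun G : ℝ => G * T + G * T / (1 - Real.exp (L * (G * T))) - 1 / p)
        (T + (T * (1 - Real.exp (L * (G * T))) -
            (G * T) * (0 - Real.exp (L * (G * T)) * (L * T))) /
          (1 - Real.exp (L * (G * T))) ^ 2) G := by
    intro G hG
    have hG0 : 0 < G := hG
    have hs : L * (G * T) < 0 :=
      mul_neg_of_neg_of_pos hLneg (by positivity)
    have hE1 : Real.exp (L * (G * T)) < 1 := Real.exp_lt_one_iff.mpr hs
    have hD : 1 - Real.exp (L * (G * T)) ≠ 0 := by linarith
    have h1 : HasDerivAt (fun x : ℝ => x * T) T G := by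
      simpa using (hasDerivAt_id G).mul_const T
    have h2 : HasDerivAt (fun x : ℝ => L * (x * T)) (L * T) G := by
      simpa using h1.const_mul L
    have h3 : HasDerivAt (fun x : ℝ => Real.exp (L * (x * T)))
        (Real.exp (L * (G * T)) * (L * T)) G := (Real.hasDerivAt_exp _).comp G h2
    have h4 : HasDerivAt (fun x : ℝ => 1 - Real.exp (L * (x * T)))
        (0 - Real.exp (L * (G * T)) * (L * T)) G := (hasDerivAt_const G 1).sub h3
    have h5 := h1.div h4 hD
    exact (h1.add h5).sub_const (1 / p)
  apply strictMonoOn_of_deriv_pos (convex_Ioi 0)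
  · exact fun G hG => (key G hG).continuousAt.continuousWithinAt
  · intro G hG
    rw [interior_Ioi] at hG
    rw [(key G hG).deriv]
    have hG0 : 0 < G := hG
    set E := Real.exp (L * (G * T)) with hEdef
    have hs : L * (G * T) < 0 := mul_neg_of_neg_of_pos hLneg (by positivity)
    have hE1 : E < 1 := Real.exp_lt_one_iff.mpr hs
    have hE0 : 0 < E := Real.exp_pos _
    have hD : 0 < 1 - E := by linarith
    have hexp : (-(L * (G * T))) + 1 < Real.exp (-(L * (G * T))) :=
      Real.add_one_lt_exp (by linarith)
    have hinv : E * Real.exp (-(L * (G * T))) = 1 := by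
      rw [← Real.exp_add]; simp
    have hnum : 0 < T * (1 - E) - (G * T) * (0 - E * (L * T)) := by
      have h6 : E * ((-(L * (G * T))) + 1) < 1 := by
        calc E * ((-(L * (G * T))) + 1) < E * Real.exp (-(L * (G * T))) := by
              exact (mul_lt_mul_iff_right₀ hE0).mpr hexp
          _ = 1 := hinv
      nlinarith [hT, hE0]
    have hsq : 0 < (1 - E) ^ 2 := by positivity
    have : 0 < (T * (1 - E) - (G * T) * (0 - E * (L * T))) / (1 - E) ^ 2 :=
      div_pos hnum hsq
    linarith
end

section
/- Let 0 < p < 1, T > 0, α > 2, C > 0, define ξ(G) = C·(1 − (1−p)^{G·T})·G^{−2/α} and T_comm(G) = G·T + G·T/(1 − (1−p)^{G·T}) − 1/p for G > 0, and let F > 0. Suppose the feasible set S = {G ≥ 1 : ξ(G) ≤ F} is nonempty. If ξ(1) ≤ F, then the minimum of T_comm over S equals T_comm(1) = T + T/(1 − (1−p)^{T}) − 1/p. If ξ(1) > F, then F < ξ(g₀) (g₀ the maximizer of ξ), and the minimum of T_comm over S equals T_comm(g_b), where g_b is the unique solution of ξ(g_b) = F in (g₀, ∞). -/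
open Real Set

/-- Key inequality: `x ↦ x / (1 - q ^ x)` is monotone on positives for `q ∈ (0,1)`. -/
private lemma frac_mono {q : ℝ} (hq0 : 0 < q) (hq1 : q < 1) {x y : ℝ}
    (hx : 0 < x) (hxy : x ≤ y) :
    x / (1 - q ^ x) ≤ y / (1 - q ^ y) := by
  have hy : 0 < y := lt_of_lt_of_le hx hxy
  have hL : Real.log q < 0 := Real.log_neg hq0 hq1
  have hqx : (q : ℝ) ^ x = Real.exp (Real.log q * x) := Real.rpow_def_of_pos hq0 x
  have hqy : (q : ℝ) ^ y = Real.exp (Real.log q * y) := Real.rpow_def_of_pos hq0 y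
  have hdx : 0 < 1 - q ^ x := by
    rw [hqx]
    have h1 : Real.log q * x < 0 := mul_neg_of_neg_of_pos hL hx
    linarith [Real.exp_lt_one_iff.mpr h1]
  have hdy : 0 < 1 - q ^ y := by
    rw [hqy]
    have h1 : Real.log q * y < 0 := mul_neg_of_neg_of_pos hL hy
    linarith [Real.exp_lt_one_iff.mpr h1]
  rw [div_le_div_iff₀ hdx hdy]
  -- goal: x * (1 - q ^ y) ≤ y * (1 - q ^ x)
  have hsec := convexOn_exp.secant_mono (a := (0 : ℝ)) (x := Real.log q * y)
      (y := Real.log q * x) (Set.mem_univ _) (Set.mem_univ _) (Set.mem_univ _)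
      (ne_of_lt (mul_neg_of_neg_of_pos hL hy)) (ne_of_lt (mul_neg_of_neg_of_pos hL hx))
      (by nlinarith)
  rw [Real.exp_zero, sub_zero, sub_zero] at hsec
  set A := Real.exp (Real.log q * x) with hA
  set B := Real.exp (Real.log q * y) with hB
  -- hsec : (B - 1) / (log q * y) ≤ (A - 1) / (log q * x)
  have e1 : (B - 1) / (Real.log q * y) = (1 - B) / (-Real.log q * y) := by
    rw [← neg_div_neg_eq]; ring_nf
  have e2 : (A - 1) / (Real.log q * x) = (1 - A) / (-Real.log q * x) := by
    rw [← neg_div_neg_eq]; ring_nf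
  rw [e1, e2, div_le_div_iff₀ (mul_pos (neg_pos.mpr hL) hy) (mul_pos (neg_pos.mpr hL) hx)]
    at hsec
  -- hsec : (1 - B) * (-log q * x) ≤ (1 - A) * (-log q * y)
  have hLpos : 0 < -Real.log q := neg_pos.mpr hL
  rw [hqx, hqy]
  nlinarith [hsec, hLpos]

/-- minimization of `T_comm` over the feasible set
`S = {G ≥ 1 : ξ(G) ≤ F}` (nonempty). If `ξ(1) ≤ F` the minimum is `T_comm(1)`;
if `ξ(1) > F` then `F < ξ(g₀)` and the minimum is `T_comm(g_b)` where `g_b` is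
the unique solution of `ξ(g_b) = F` in `(g₀, ∞)`. -/
theorem stmt_7 (p T α C F g₀ : ℝ) (hp0 : 0 < p) (hp1 : p < 1) (hT : 0 < T)
    (hα : 2 < α) (hC : 0 < C) (hF : 0 < F) (ξ Tcomm : ℝ → ℝ)
    (hξ : ∀ G : ℝ, 0 < G → ξ G = C * (1 - (1 - p) ^ (G * T)) * G ^ (-2 / α))
    (hTcomm : ∀ G : ℝ,
      Tcomm G = G * T + G * T / (1 - (1 - p) ^ (G * T)) - 1 / p)
    (hg₀ : 0 < g₀) (hmono : StrictMonoOn ξ (Set.Ioc 0 g₀))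
    (hanti : StrictAntiOn ξ (Set.Ici g₀)) (hmax : ∀ G, 0 < G → ξ G ≤ ξ g₀)
    (hS : ∃ G : ℝ, 1 ≤ G ∧ ξ G ≤ F) :
    (ξ 1 ≤ F →
      IsLeast (Tcomm '' {G : ℝ | 1 ≤ G ∧ ξ G ≤ F}) (Tcomm 1) ∧
      Tcomm 1 = T + T / (1 - (1 - p) ^ T) - 1 / p) ∧
    (F < ξ 1 →
      F < ξ g₀ ∧ (∃! gb : ℝ, g₀ < gb ∧ ξ gb = F) ∧
      ∀ gb : ℝ, g₀ < gb → ξ gb = F →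
        IsLeast (Tcomm '' {G : ℝ | 1 ≤ G ∧ ξ G ≤ F}) (Tcomm gb)) := by
  have hq0 : 0 < 1 - p := by linarith
  have hq1 : 1 - p < 1 := by linarith
  -- monotonicity of Tcomm
  have tmono : ∀ a b : ℝ, 0 < a → a ≤ b → Tcomm a ≤ Tcomm b := by
    intro a b ha hab
    rw [hTcomm a, hTcomm b]
    have h1 : a * T ≤ b * T := mul_le_mul_of_nonneg_right hab hT.le
    have h2 := frac_mono hq0 hq1 (mul_pos ha hT) h1
    linarith
  -- mono / anti in ≤ form
  have mono_le : ∀ a b : ℝ, 0 < a → a ≤ b → b ≤ g₀ → ξ a ≤ ξ b := by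
    intro a b ha hab hb
    rcases eq_or_lt_of_le hab with rfl | h
    · exact le_rfl
    · exact (hmono ⟨ha, le_trans hab hb⟩ ⟨lt_of_lt_of_le ha hab, hb⟩ h).le
  constructor
  · intro h1F
    refine ⟨⟨⟨1, ⟨le_rfl, h1F⟩, rfl⟩, ?_⟩, ?_⟩
    · rintro t ⟨G, ⟨hG1, _⟩, rfl⟩
      exact tmono 1 G one_pos hG1
    · rw [hTcomm 1, one_mul]
  · intro hF1
    have hFg₀ : F < ξ g₀ := lt_of_lt_of_le hF1 (hmax 1 one_pos)
    -- feasible points lie above g₀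
    have key : ∀ G : ℝ, 1 ≤ G → ξ G ≤ F → g₀ < G := by
      intro G hG1 hGF
      by_contra h
      push_neg at h
      have := mono_le 1 G one_pos hG1 h
      linarith
    obtain ⟨Gs, hGs1, hGsF⟩ := hS
    have hGsg₀ : g₀ < Gs := key Gs hGs1 hGsF
    -- continuity of ξ on [g₀, Gs]
    have hcont : ContinuousOn ξ (Set.Icc g₀ Gs) := by
      have hsub : Set.Icc g₀ Gs ⊆ {G : ℝ | 0 < G} := fun x hx => lt_of_lt_of_le hg₀ hx.1
      have hform : ContinuousOn
          (fun G : ℝ => C * (1 - (1 - p) ^ (G * T)) * G ^ (-2 / α)) (Set.Icc g₀ Gs) := by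
        apply ContinuousOn.mul
        · apply continuousOn_const.mul
          apply continuousOn_const.sub
          have : (fun G : ℝ => (1 - p) ^ (G * T)) =
              fun G : ℝ => Real.exp (Real.log (1 - p) * (G * T)) := by
            funext G; exact Real.rpow_def_of_pos hq0 _
          rw [this]
          exact (Real.continuous_exp.comp (continuous_const.mul
            (continuous_id.mul continuous_const))).continuousOn
        · exact ContinuousOn.rpow_const continuousOn_id
            (fun x hx => Or.inl (ne_of_gt (hsub hx)))
      exact ContinuousOn.congr hform (fun x hx => hξ x (hsub hx))
    -- IVT: get gb
    have hmem : F ∈ Set.Icc (ξ Gs) (ξ g₀) := ⟨hGsF, hFg₀.le⟩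
    obtain ⟨gb, hgbmem, hgbF⟩ := intermediate_value_Icc' hGsg₀.le hcont hmem
    have hgbg₀ : g₀ < gb := by
      rcases eq_or_lt_of_le hgbmem.1 with rfl | h
      · exact absurd hgbF (ne_of_gt hFg₀)
      · exact h
    refine ⟨hFg₀, ⟨gb, ⟨hgbg₀, hgbF⟩, ?_⟩, ?_⟩
    · rintro y ⟨hyg₀, hyF⟩
      exact hanti.injOn (Set.mem_Ici.mpr hyg₀.le) (Set.mem_Ici.mpr hgbg₀.le)
        (by rw [hyF, hgbF])
    · intro g hg hgF
      have hg1 : 1 ≤ g := by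
        by_contra h
        push_neg at h
        have h1g₀ : g₀ < 1 := lt_trans hg h
        have := hanti (Set.mem_Ici.mpr hg.le) (Set.mem_Ici.mpr h1g₀.le) h
        linarith
      refine ⟨⟨g, ⟨hg1, hgF.le⟩, rfl⟩, ?_⟩
      rintro t ⟨G, ⟨hG1, hGF⟩, rfl⟩
      have hGg₀ : g₀ < G := key G hG1 hGF
      have hgG : g ≤ G := by
        by_contra h
        push_neg at h
        have := hanti (Set.mem_Ici.mpr hGg₀.le) (Set.mem_Ici.mpr hg.le) h
        linarith
      exact tmono g G (lt_trans hg₀ hg) hgG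
end

section
/- Let N be a Poisson random variable with mean λ > 0, let K be a nonnegative integer, and let β > 0 and μ > 0 satisfy μ > β·K. Then (∑_{n=0}^{K} P(N = n)/(μ − β·n)) / P(N ≤ K) ≥ 1/(μ − β·λ·(1 − P(N = K)/P(N ≤ K))). -/
/-- Jensen-type lower bound. For a Poisson random variable `N`
with mean `lam > 0` (`P(N = n) = lamⁿ e^{−lam}/n!`), `K : ℕ`, `β > 0`, `μ > 0`
with `μ > β·K`:
`E[1/(μ − βN) | N ≤ K] ≥ 1/(μ − β·lam·(1 − P(N = K)/P(N ≤ K)))`. -/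
theorem stmt_12 (lam β μ : ℝ) (K : ℕ) (hlam : 0 < lam) (hβ : 0 < β)
    (hμ : 0 < μ) (hμK : β * K < μ) :
    (∑ n ∈ Finset.range (K + 1),
        (lam ^ n * Real.exp (-lam) / n.factorial) / (μ - β * n))
        / (∑ n ∈ Finset.range (K + 1), lam ^ n * Real.exp (-lam) / n.factorial)
      ≥ 1 / (μ - β * lam * (1 - (lam ^ K * Real.exp (-lam) / K.factorial)
          / (∑ n ∈ Finset.range (K + 1),
              lam ^ n * Real.exp (-lam) / n.factorial))) := by
  have hexp : 0 < Real.exp (-lam) := Real.exp_pos _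
  set p : ℕ → ℝ := fun n => lam ^ n * Real.exp (-lam) / n.factorial with hp
  have hgoal : ∀ n : ℕ, lam ^ n * Real.exp (-lam) / (n.factorial : ℝ) = p n :=
    fun n => rfl
  have hppos : ∀ n, 0 < p n := fun n => by
    apply div_pos (mul_pos (pow_pos hlam n) hexp)
    exact_mod_cast Nat.factorial_pos n
  set S : ℝ := ∑ n ∈ Finset.range (K + 1), p n with hSdef
  have hS : 0 < S := Finset.sum_pos (fun n _ => hppos n) (by simp)
  set M : ℝ := ∑ n ∈ Finset.range (K + 1), (n : ℝ) * p n with hMdef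
  have hM : M = lam * (S - p K) := by
    have h1 : S - p K = ∑ n ∈ Finset.range K, p n := by
      rw [hSdef, Finset.sum_range_succ]; ring
    rw [hMdef, h1, Finset.sum_range_succ' (fun n => (n : ℝ) * p n) K, Finset.mul_sum]
    simp only [Nat.cast_zero, zero_mul, add_zero]
    refine Finset.sum_congr rfl fun i _ => ?_
    simp only [hp]
    rw [Nat.factorial_succ]
    have hi : ((i.factorial : ℝ)) ≠ 0 := by exact_mod_cast (Nat.factorial_pos i).ne'
    push_cast
    field_simp
    ring
  have hMK : M ≤ K * S := by
    rw [hSdef, Finset.mul_sum]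
    refine Finset.sum_le_sum fun n hn => ?_
    have : (n : ℝ) ≤ K := by
      exact_mod_cast Nat.lt_succ_iff.mp (Finset.mem_range.mp hn)
    exact mul_le_mul_of_nonneg_right this (hppos n).le
  set m : ℝ := M / S with hmdef
  have hmK : m ≤ K := by rw [hmdef, div_le_iff₀ hS]; linarith
  set T : ℝ := μ - β * m with hTdef
  have hT : 0 < T := by
    have : β * m ≤ β * K := mul_le_mul_of_nonneg_left hmK hβ.le
    simp only [hTdef]; linarith
  have hsumM : m * S = M := by rw [hmdef]; field_simp
  have hRHS : μ - β * lam * (1 - p K / S) = T := by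
    rw [hTdef, hmdef, hM]
    field_simp
  have key : S / T ≤ ∑ n ∈ Finset.range (K + 1), p n / (μ - β * n) := by
    have h2 : ∀ n ∈ Finset.range (K + 1),
        p n / T + β / T ^ 2 * ((n : ℝ) * p n - m * p n) ≤ p n / (μ - β * n) := by
      intro n hn
      have hnK : (n : ℝ) ≤ K := by
        exact_mod_cast Nat.lt_succ_iff.mp (Finset.mem_range.mp hn)
      have ha : 0 < μ - β * n := by nlinarith
      have hdiff : p n / (μ - β * n) -
          (p n / T + β / T ^ 2 * ((n : ℝ) * p n - m * p n))
          = p n * (T - (μ - β * n)) ^ 2 / ((μ - β * n) * T ^ 2) := by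
        have hT' : μ - β * m ≠ 0 := by rw [← hTdef]; exact hT.ne'
        have ha' := ha.ne'
        rw [hTdef]
        field_simp
        ring
      have hnonneg : 0 ≤ p n * (T - (μ - β * n)) ^ 2 / ((μ - β * n) * T ^ 2) := by
        have := (hppos n).le
        positivity
      linarith [hdiff ▸ hnonneg]
    calc S / T
        = ∑ n ∈ Finset.range (K + 1),
            (p n / T + β / T ^ 2 * ((n : ℝ) * p n - m * p n)) := by
          rw [Finset.sum_add_distrib, ← Finset.sum_div, ← hSdef,
            ← Finset.mul_sum, Finset.sum_sub_distrib, ← hMdef,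
            ← Finset.mul_sum, ← hSdef, hsumM]
          simp
      _ ≤ _ := Finset.sum_le_sum h2
  simp only [hgoal]
  rw [ge_iff_le, hRHS, div_le_div_iff₀ hT hS, one_mul]
  rw [div_le_iff₀ hT] at key
  linarith
end

section
/- Let Q, A, C be real-valued random variables on a probability space with finite second moments, where A is Poisson distributed with mean a > 0 and C is Poisson distributed with mean c satisfying c > a, A and C are independent, Q is independent of A − C, and E[(Q + A − C)²] = E[Q²]. Then E[Q] = a/(c − a) + (c − a)/2 + 1/2. -/
open MeasureTheory ProbabilityTheory

lemma tsum_exp_series (l : ℝ) : ∑' n : ℕ, l ^ n / n.factorial = Real.exp l := by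
  rw [Real.exp_eq_exp_ℝ, NormedSpace.exp_eq_tsum_div]

lemma succ_mul_q (l : ℝ) (n : ℕ) :
    ((n : ℝ) + 1) * (l ^ (n + 1) / (n + 1).factorial) = l * (l ^ n / n.factorial) := by
  have h1 : ((n + 1).factorial : ℝ) = ((n : ℝ) + 1) * n.factorial := by
    rw [Nat.factorial_succ]; push_cast; ring
  have h2 : ((n : ℝ) + 1) ≠ 0 := by positivity
  have h3 : (n.factorial : ℝ) ≠ 0 := Nat.cast_ne_zero.2 n.factorial_ne_zero
  rw [h1, pow_succ]
  field_simp

lemma summable_n_q (l : ℝ) : Summable (fun n : ℕ => (n : ℝ) * (l ^ n / n.factorial)) := by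
  rw [← summable_nat_add_iff 1]
  have : (fun n : ℕ => ((n + 1 : ℕ) : ℝ) * (l ^ (n + 1) / (n + 1).factorial))
      = fun n : ℕ => l * (l ^ n / n.factorial) := by
    funext n; push_cast; exact succ_mul_q l n
  rw [this]
  exact (Real.summable_pow_div_factorial l).mul_left l

lemma tsum_n_q (l : ℝ) : ∑' n : ℕ, (n : ℝ) * (l ^ n / n.factorial) = l * Real.exp l := by
  rw [Summable.tsum_eq_zero_add (summable_n_q l)]
  simp only [Nat.cast_zero, zero_mul, zero_add]
  have : (fun n : ℕ => ((n + 1 : ℕ) : ℝ) * (l ^ (n + 1) / (n + 1).factorial))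
      = fun n : ℕ => l * (l ^ n / n.factorial) := by
    funext n; push_cast; exact succ_mul_q l n
  push_cast
  rw [show (fun n : ℕ => ((n:ℝ) + 1) * (l ^ (n + 1) / (n + 1).factorial))
      = fun n : ℕ => l * (l ^ n / n.factorial) from funext fun n => succ_mul_q l n,
    tsum_mul_left, tsum_exp_series]

lemma summable_n2_q (l : ℝ) : Summable (fun n : ℕ => (n : ℝ) ^ 2 * (l ^ n / n.factorial)) := by
  rw [← summable_nat_add_iff 1]
  have : (fun n : ℕ => ((n + 1 : ℕ) : ℝ) ^ 2 * (l ^ (n + 1) / (n + 1).factorial))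
      = fun n : ℕ => l * ((n : ℝ) * (l ^ n / n.factorial) + l ^ n / n.factorial) := by
    funext n
    have := succ_mul_q l n
    push_cast
    nlinarith [this]
  rw [this]
  exact (((summable_n_q l).add (Real.summable_pow_div_factorial l)).mul_left l)

lemma tsum_n2_q (l : ℝ) :
    ∑' n : ℕ, (n : ℝ) ^ 2 * (l ^ n / n.factorial) = (l ^ 2 + l) * Real.exp l := by
  rw [Summable.tsum_eq_zero_add (summable_n2_q l)]
  norm_num
  have h : (fun n : ℕ => ((n : ℝ) + 1) ^ 2 * (l ^ (n + 1) / (n + 1).factorial))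
      = fun n : ℕ => l * ((n : ℝ) * (l ^ n / n.factorial) + l ^ n / n.factorial) := by
    funext n
    have := succ_mul_q l n
    nlinarith [this]
  calc ∑' n : ℕ, ((n : ℝ) + 1) ^ 2 * (l ^ (n + 1) / (n + 1).factorial)
      = ∑' n : ℕ, l * ((n : ℝ) * (l ^ n / n.factorial) + l ^ n / n.factorial) := by
        exact congrArg tsum h
    _ = l * (∑' n : ℕ, ((n : ℝ) * (l ^ n / n.factorial) + l ^ n / n.factorial)) := tsum_mul_left
    _ = l * (l * Real.exp l + Real.exp l) := by
        rw [Summable.tsum_add (summable_n_q l) (Real.summable_pow_div_factorial l), tsum_n_q l,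
          tsum_exp_series]
    _ = (l ^ 2 + l) * Real.exp l := by ring

lemma nat_rv_moment {Ω : Type*} [MeasurableSpace Ω] (P : Measure Ω)
    (X : Ω → ℕ) (hX : Measurable X) (g : ℕ → ℝ) (hg : ∀ n, 0 ≤ g n)
    (p : ℕ → ℝ) (hp : ∀ n, 0 ≤ p n)
    (hpmf : ∀ n, P {ω | X ω = n} = ENNReal.ofReal (p n))
    (hs : Summable (fun n => g n * p n)) :
    Integrable (fun ω => g (X ω)) P ∧ ∫ ω, g (X ω) ∂P = ∑' n, g n * p n := by
  set μ := P.map X with hμ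
  have hsing : ∀ n : ℕ, μ {n} = ENNReal.ofReal (p n) := by
    intro n
    rw [hμ, Measure.map_apply hX (measurableSet_singleton n)]
    have : X ⁻¹' {n} = {ω | X ω = n} := rfl
    rw [this, hpmf]
  have hgm : AEStronglyMeasurable g μ :=
    (measurable_from_nat (f := g)).aestronglyMeasurable
  have hint : Integrable g μ := by
    refine ⟨hgm, ?_⟩
    rw [HasFiniteIntegral, lintegral_countable']
    have heq : ∀ n : ℕ, ‖g n‖ₑ * μ {n} = ENNReal.ofReal (g n * p n) := by
      intro n
      rw [hsing, ← ofReal_norm, Real.norm_of_nonneg (hg n),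
        ← ENNReal.ofReal_mul (hg n)]
    simp_rw [heq]
    rw [← ENNReal.ofReal_tsum_of_nonneg (fun n => mul_nonneg (hg n) (hp n)) hs]
    exact ENNReal.ofReal_lt_top
  have hintX : Integrable (fun ω => g (X ω)) P :=
    (integrable_map_measure hgm hX.aemeasurable).mp hint
  refine ⟨hintX, ?_⟩
  have h1 : ∫ ω, g (X ω) ∂P = ∫ n, g n ∂μ :=
    (integral_map hX.aemeasurable hgm).symm
  rw [h1, integral_countable' hint]
  congr 1
  funext n
  rw [measureReal_def, hsing, ENNReal.toReal_ofReal (hp n), smul_eq_mul, mul_comm]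

lemma poisson_data {Ω : Type*} [MeasurableSpace Ω] (P : Measure Ω)
    (X : Ω → ℕ) (hX : Measurable X) (l : ℝ) (hl : 0 < l)
    (hpmf : ∀ n, P {ω | X ω = n}
      = ENNReal.ofReal (l ^ n * Real.exp (-l) / n.factorial)) :
    Integrable (fun ω => (X ω : ℝ)) P ∧ (∫ ω, (X ω : ℝ) ∂P = l) ∧
      Integrable (fun ω => (X ω : ℝ) ^ 2) P ∧ (∫ ω, (X ω : ℝ) ^ 2 ∂P = l + l ^ 2) := by
  set p : ℕ → ℝ := fun n => l ^ n * Real.exp (-l) / n.factorial with hpdef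
  have hp : ∀ n, 0 ≤ p n := by
    intro n; have := hl.le; positivity
  have hpform : ∀ n, p n = (l ^ n / n.factorial) * Real.exp (-l) := by
    intro n; simp only [hpdef]; ring
  have hee : Real.exp l * Real.exp (-l) = 1 := by
    rw [← Real.exp_add]; simp
  -- first moment
  have hg1 : (fun n : ℕ => (n : ℝ) * p n)
      = fun n : ℕ => ((n : ℝ) * (l ^ n / n.factorial)) * Real.exp (-l) := by
    funext n; rw [hpform]; ring
  have hs1 : Summable (fun n : ℕ => (n : ℝ) * p n) := by
    rw [hg1]; exact (summable_n_q l).mul_right _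
  have ht1 : ∑' n : ℕ, (n : ℝ) * p n = l := by
    rw [hg1, tsum_mul_right, tsum_n_q]
    nlinarith [hee]
  have h1 := nat_rv_moment P X hX (fun n => (n : ℝ)) (fun n => Nat.cast_nonneg n)
    p hp hpmf hs1
  -- second moment
  have hg2 : (fun n : ℕ => (n : ℝ) ^ 2 * p n)
      = fun n : ℕ => ((n : ℝ) ^ 2 * (l ^ n / n.factorial)) * Real.exp (-l) := by
    funext n; rw [hpform]; ring
  have hs2 : Summable (fun n : ℕ => (n : ℝ) ^ 2 * p n) := by
    rw [hg2]; exact (summable_n2_q l).mul_right _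
  have ht2 : ∑' n : ℕ, (n : ℝ) ^ 2 * p n = l + l ^ 2 := by
    rw [hg2, tsum_mul_right, tsum_n2_q]
    nlinarith [hee]
  have h2 := nat_rv_moment P X hX (fun n => (n : ℝ) ^ 2)
    (fun n => by positivity) p hp hpmf hs2
  exact ⟨h1.1, h1.2.trans ht1, h2.1, h2.2.trans ht2⟩

/-- heavy-traffic stationary mean queue length with Poisson
arrivals `A` (mean `a`) and departures `C` (mean `c > a`), `A ⟂ C`, `Q`
independent of `A − C`, and stationarity `E[(Q + A − C)²] = E[Q²]`:
`E[Q] = a/(c − a) + (c − a)/2 + 1/2`. -/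
theorem stmt_15 {Ω : Type*} [MeasurableSpace Ω] (P : Measure Ω)
    [IsProbabilityMeasure P] (Q : Ω → ℝ) (A C : Ω → ℕ) (a c : ℝ)
    (ha : 0 < a) (hac : a < c)
    (hQ : MemLp Q 2 P) (hAmeas : Measurable A) (hCmeas : Measurable C)
    (hA : ∀ n : ℕ, P {ω | A ω = n}
      = ENNReal.ofReal (a ^ n * Real.exp (-a) / n.factorial))
    (hC : ∀ n : ℕ, P {ω | C ω = n}
      = ENNReal.ofReal (c ^ n * Real.exp (-c) / n.factorial))
    (hAC : IndepFun A C P)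
    (hind : IndepFun Q (fun ω => (A ω : ℝ) - (C ω : ℝ)) P)
    (hstat : ∫ ω, (Q ω + (A ω : ℝ) - (C ω : ℝ)) ^ 2 ∂P
      = ∫ ω, (Q ω) ^ 2 ∂P) :
    ∫ ω, Q ω ∂P = a / (c - a) + (c - a) / 2 + 1 / 2 := by
  obtain ⟨intA, EA, intA2, EA2⟩ := poisson_data P A hAmeas a ha hA
  obtain ⟨intC, EC, intC2, EC2⟩ := poisson_data P C hCmeas c (ha.trans hac) hC
  set fA : Ω → ℝ := fun ω => (A ω : ℝ) with hfA
  set fC : Ω → ℝ := fun ω => (C ω : ℝ) with hfC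
  set D : Ω → ℝ := fun ω => (A ω : ℝ) - (C ω : ℝ) with hD
  have hmA : MemLp fA 2 P :=
    (memLp_two_iff_integrable_sq intA.aestronglyMeasurable).mpr intA2
  have hmC : MemLp fC 2 P :=
    (memLp_two_iff_integrable_sq intC.aestronglyMeasurable).mpr intC2
  have hDmem : MemLp D 2 P := hmA.sub hmC
  have intD : Integrable D P := intA.sub intC
  have ED : ∫ ω, D ω ∂P = a - c := by
    have : ∫ ω, D ω ∂P = (∫ ω, fA ω ∂P) - ∫ ω, fC ω ∂P := integral_sub intA intC
    rw [this, EA, EC]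
  have hACr : IndepFun fA fC P :=
    hAC.comp (measurable_from_nat (f := fun n : ℕ => (n : ℝ)))
      (measurable_from_nat (f := fun n : ℕ => (n : ℝ)))
  have intAC : Integrable (fA * fC) P := hACr.integrable_mul intA intC
  have intAC' : Integrable (fun ω => fA ω * fC ω) P := intAC
  have EAC : ∫ ω, fA ω * fC ω ∂P = a * c := by
    have := hACr.integral_mul_eq_mul_integral intA.aestronglyMeasurable intC.aestronglyMeasurable
    rw [show integral P (fA * fC) = ∫ ω, fA ω * fC ω ∂P from rfl] at this
    rw [this, EA, EC]
  have intD2 : Integrable (fun ω => D ω ^ 2) P :=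
    (memLp_two_iff_integrable_sq hDmem.aestronglyMeasurable).mp hDmem
  have ED2 : ∫ ω, D ω ^ 2 ∂P = a + a ^ 2 - 2 * (a * c) + (c + c ^ 2) := by
    have hexp : (fun ω => D ω ^ 2)
        = fun ω => (fA ω ^ 2 - 2 * (fA ω * fC ω)) + fC ω ^ 2 := by
      funext ω; simp only [hD, hfA, hfC]; ring
    have i2 : Integrable (fun ω => 2 * (fA ω * fC ω)) P := intAC'.const_mul 2
    have i1 : Integrable (fun ω => fA ω ^ 2 - 2 * (fA ω * fC ω)) P := intA2.sub i2
    rw [hexp, integral_add i1 intC2, integral_sub intA2 i2, integral_const_mul 2 _,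
      EA2, EC2, EAC]
  have intQ : Integrable Q P := hQ.integrable one_le_two
  have intQ2 : Integrable (fun ω => Q ω ^ 2) P :=
    (memLp_two_iff_integrable_sq hQ.aestronglyMeasurable).mp hQ
  have intQD : Integrable (fun ω => Q ω * D ω) P := hind.integrable_mul intQ intD
  have EQD : ∫ ω, Q ω * D ω ∂P = (∫ ω, Q ω ∂P) * (a - c) := by
    have := hind.integral_mul_eq_mul_integral intQ.aestronglyMeasurable intD.aestronglyMeasurable
    rw [show integral P (Q * D) = ∫ ω, Q ω * D ω ∂P from rfl] at this
    rw [this, ED]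
  have key : ∫ ω, (Q ω + (A ω : ℝ) - (C ω : ℝ)) ^ 2 ∂P
      = (∫ ω, Q ω ^ 2 ∂P) + (2 * ∫ ω, Q ω * D ω ∂P) + ∫ ω, D ω ^ 2 ∂P := by
    have hexp : (fun ω => (Q ω + (A ω : ℝ) - (C ω : ℝ)) ^ 2)
        = fun ω => (Q ω ^ 2 + 2 * (Q ω * D ω)) + D ω ^ 2 := by
      funext ω; simp only [hD]; ring
    have j2 : Integrable (fun ω => 2 * (Q ω * D ω)) P := intQD.const_mul 2
    have j1 : Integrable (fun ω => Q ω ^ 2 + 2 * (Q ω * D ω)) P := intQ2.add j2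
    rw [hexp, integral_add j1 intD2, integral_add intQ2 j2, integral_const_mul 2 _]
  rw [key, EQD, ED2] at hstat
  set m := ∫ ω, Q ω ∂P
  have hne : c - a ≠ 0 := ne_of_gt (sub_pos.mpr hac)
  have hm : m = (a + a ^ 2 - 2 * (a * c) + (c + c ^ 2)) / (2 * (c - a)) := by
    field_simp
    nlinarith [hstat]
  rw [hm]
  field_simp
  ring
end
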